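/- Let N be a reticulation-visible network with at least two leaves. Then N has a big tree node component C such that every tree node component of N whose root is a proper descendant of the root of C is a single-leaf component (i.e., below C there are only single-leaf components). -/

import Mathlib

/-!
Framework for rooted phylogenetic networks, formalized as directed graphs
given by an adjacency relation `A : V → V → Prop` on a vertex type `V`,
with a distinguished root `ρ`.  Leaves are identified with their (unique)
labels, i.e. the labelling is the identity on leaf vertices.
-/

namespace PhyloNet

variable {V : Type} {W : Type}

/-- Indegree of a vertex. -/
noncomputable def inDeg (A : V → V → Prop) (v : V) : ℕ := {u | A u v}.ncard

/-- Outdegree of a vertex. -/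
noncomputable def outDeg (A : V → V → Prop) (v : V) : ℕ := {w | A v w}.ncard

/-- `p` is a directed path (walk) from `u` to `v`, given as the list of its vertices. -/
def IsPath (A : V → V → Prop) (u v : V) (p : List V) : Prop :=
  p.Chain' A ∧ p.head? = some u ∧ p.getLast? = some v

/-- `A` with root `ρ` is a phylogenetic network: a finite rooted acyclic digraph whose
root has indegree 0 and outdegree ≥ 2, from which every node is reachable, and in which
every non-root node is either a leaf (indegree 1, outdegree 0), an internal tree node
(indegree 1, outdegree ≥ 2) or a reticulation (indegree ≥ 2, outdegree 1). -/
structure IsNetwork (A : V → V → Prop) (ρ : V) : Prop where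
  finite : Finite V
  acyclic : ∀ v, ¬ Relation.TransGen A v v
  root_indeg : inDeg A ρ = 0
  root_outdeg : 2 ≤ outDeg A ρ
  reach_from_root : ∀ v, Relation.ReflTransGen A ρ v
  degree_cond : ∀ v, v ≠ ρ →
    (inDeg A v = 1 ∧ (outDeg A v = 0 ∨ 2 ≤ outDeg A v)) ∨ (2 ≤ inDeg A v ∧ outDeg A v = 1)

/-- Reticulation node: indegree ≥ 2 and outdegree 1. -/
def IsRet (A : V → V → Prop) (v : V) : Prop := 2 ≤ inDeg A v ∧ outDeg A v = 1

/-- Leaf: indegree 1 and outdegree 0. -/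
def IsLeaf (A : V → V → Prop) (v : V) : Prop := inDeg A v = 1 ∧ outDeg A v = 0

/-- Tree node: any node that is not a reticulation node. -/
def IsTreeNode (A : V → V → Prop) (v : V) : Prop := ¬ IsRet A v

/-- `u` is visible on `v`: every directed path from the root `ρ` to `v` contains `u`. -/
def Visible (A : V → V → Prop) (ρ u v : V) : Prop := ∀ p, IsPath A ρ v p → u ∈ p

/-- A network is reticulation-visible if every reticulation node is visible on some leaf. -/
def RetVisible (A : V → V → Prop) (ρ : V) : Prop :=
  ∀ r, IsRet A r → ∃ ℓ, IsLeaf A ℓ ∧ Visible A ρ r ℓ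

/-- Undirected adjacency in the subgraph `N − R(N)` induced on tree nodes. -/
def TAdj (A : V → V → Prop) (u v : V) : Prop :=
  IsTreeNode A u ∧ IsTreeNode A v ∧ (A u v ∨ A v u)

/-- `S` is a tree node component: a connected component (ignoring directions) of the
subgraph induced on the tree nodes. -/
def IsTNC (A : V → V → Prop) (S : Set V) : Prop :=
  ∃ u, IsTreeNode A u ∧ S = {v | Relation.ReflTransGen (TAdj A) u v}

/-- `r` is the root of the tree node component `S`: it lies in `S` and has indegree 0
within `N − R(N)`, i.e. it has no tree-node parent. -/
def CompRoot (A : V → V → Prop) (S : Set V) (r : V) : Prop :=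
  r ∈ S ∧ ∀ u, IsTreeNode A u → ¬ A u r

/-- Tree node component `C'` is below tree node component `C''`. -/
def Below (A : V → V → Prop) (C' C'' : Set V) : Prop :=
  ∃ r, IsRet A r ∧ (∃ c, A r c ∧ CompRoot A C' c) ∧ (∃ p ∈ C'', A p r)

/-- A big tree node component: a tree node component with at least two nodes. -/
def BigTNC (A : V → V → Prop) (C : Set V) : Prop :=
  IsTNC A C ∧ ∃ a ∈ C, ∃ b ∈ C, a ≠ b

/-- A single-leaf component: its node set is `{ℓ}` for some leaf `ℓ`. -/
def SingleLeafTNC (A : V → V → Prop) (C : Set V) : Prop :=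
  ∃ ℓ, IsLeaf A ℓ ∧ C = {ℓ}

/-- A lowest big tree node component: a big tree node component `C` such that every
tree node component whose root is a proper descendant of the root of `C` is a
single-leaf component. -/
def LowestBig (A : V → V → Prop) (C : Set V) : Prop :=
  BigTNC A C ∧ ∀ C' r' rC, IsTNC A C' → CompRoot A C' r' → CompRoot A C rC →
    Relation.TransGen A rC r' → SingleLeafTNC A C'

/-- An inner reticulation: all of its parents lie in one and the same tree node component. -/
def InnerRet (A : V → V → Prop) (r : V) : Prop :=
  IsRet A r ∧ ∃ S, IsTNC A S ∧ ∀ p, A p r → p ∈ S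

/-- `IR(C)`: reticulations all of whose parents lie in `C`. -/
def IRset (A : V → V → Prop) (C : Set V) : Set V :=
  {r | IsRet A r ∧ ∀ p, A p r → p ∈ C}

/-- `CR(C)`: reticulations with at least one parent in `C` and at least one parent outside `C`. -/
def CRset (A : V → V → Prop) (C : Set V) : Set V :=
  {r | IsRet A r ∧ (∃ p, A p r ∧ p ∈ C) ∧ (∃ p, A p r ∧ p ∉ C)}

/-- `L_C`: the leaves of the network lying in `C` together with the children of the
inner reticulations below `C`. -/
def LCset (A : V → V → Prop) (C : Set V) : Set V :=
  {ℓ | ℓ ∈ C ∧ IsLeaf A ℓ} ∪ {x | ∃ r ∈ IRset A C, A r x}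

/-- Bicombining: every reticulation node has indegree exactly 2. -/
def Bicombining (A : V → V → Prop) : Prop := ∀ r, IsRet A r → inDeg A r = 2

/-- Galled: every reticulation node `r` has an ancestor `u` admitting two
internal-node-disjoint directed paths from `u` to `r` in which every node other
than `r` is a tree node. -/
def Galled (A : V → V → Prop) : Prop :=
  ∀ r, IsRet A r → ∃ u, Relation.TransGen A u r ∧ ∃ p₁ p₂ : List V,
    IsPath A u r p₁ ∧ IsPath A u r p₂ ∧ p₁ ≠ p₂ ∧
    (∀ x, x ∈ p₁ → x ∈ p₂ → x = u ∨ x = r) ∧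
    (∀ x ∈ p₁, x ≠ r → IsTreeNode A x) ∧ (∀ x ∈ p₂, x ≠ r → IsTreeNode A x)

/-- Restriction of a digraph to a vertex subset. -/
def Restrict (A : V → V → Prop) (S : Set V) : V → V → Prop :=
  fun a b => a ∈ S ∧ b ∈ S ∧ A a b

/-- Descendants of `u` (including `u`); the vertex set of the subnetwork `D_N(u)`. -/
def Desc (A : V → V → Prop) (u : V) : Set V := {v | Relation.ReflTransGen A u v}

/-- Binary network: the root has outdegree 2, leaves have degree 1, and every other
node has total degree 3. -/
def IsBinary (A : V → V → Prop) (ρ : V) : Prop :=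
  outDeg A ρ = 2 ∧ ∀ v, v ≠ ρ →
    (inDeg A v = 1 ∧ outDeg A v = 0) ∨ (inDeg A v = 1 ∧ outDeg A v = 2) ∨
    (inDeg A v = 2 ∧ outDeg A v = 1)

/-- A phylogenetic tree: a network with no reticulation nodes. -/
def IsPhyloTree (A : W → W → Prop) (ρ : W) : Prop :=
  IsNetwork A ρ ∧ ∀ w, ¬ IsRet A w

/-- A node with indegree 1 and outdegree 1 (a suppressible node). -/
def Deg11 (A : V → V → Prop) (v : V) : Prop := inDeg A v = 1 ∧ outDeg A v = 1

/-- There is a directed path from `a` to `b` (of length ≥ 1) all of whose internal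
nodes are suppressible. -/
def SubdivPath (A : V → V → Prop) (a b : V) : Prop :=
  ∃ p : List V, IsPath A a b p ∧ 2 ≤ p.length ∧ ∀ z ∈ p, z ≠ a → z ≠ b → Deg11 A z

/-- `φ` witnesses that the digraph `A'` on the vertex set `S` is a subdivision of the
tree `AT` restricted to the vertex set `SW`: `φ` injectively maps the tree nodes onto
the non-suppressible nodes, edges of the tree correspond exactly to directed paths
whose internal nodes are suppressible, and leaves are mapped according to the leaf
correspondence `θ` (same labels). -/
def SubdivWitness (A' : V → V → Prop) (S : Set V) (AT : W → W → Prop) (SW : Set W)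
    (θ : W → V) (φ : W → V) : Prop :=
  Set.InjOn φ SW ∧ (∀ w ∈ SW, φ w ∈ S) ∧
  (∀ x ∈ S, ¬ Deg11 (Restrict A' S) x → ∃ w ∈ SW, φ w = x) ∧
  (∀ x ∈ SW, ∀ y ∈ SW, (Restrict AT SW x y ↔ SubdivPath (Restrict A' S) (φ x) (φ y))) ∧
  (∀ w ∈ SW, outDeg (Restrict AT SW) w = 0 → φ w = θ w)

/-- The digraph `A'` on vertex set `S` is a subdivision of the tree `AT` on `SW`. -/
def IsSubdivisionOf (A' : V → V → Prop) (S : Set V) (AT : W → W → Prop) (SW : Set W)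
    (θ : W → V) : Prop :=
  ∃ φ, SubdivWitness A' S AT SW θ φ

/-- `E`, `D`, `φ` witness that the subnetwork of `A` on vertex set `S` displays the
subtree of `AT` on vertex set `SW`: `E` is a set of reticulation edges of the
subnetwork containing all but one of the incoming edges of each reticulation node of
the subnetwork, `D` is a set of deleted nodes, and `φ` witnesses that the result is a
subdivision of the subtree. -/
def DisplayWitness (A : V → V → Prop) (S : Set V) (AT : W → W → Prop) (SW : Set W)
    (θ : W → V) (E : Set (V × V)) (D : Set V) (φ : W → V) : Prop :=
  (∀ e ∈ E, Restrict A S e.1 e.2 ∧ 2 ≤ inDeg (Restrict A S) e.2) ∧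
  (∀ r ∈ S, 2 ≤ inDeg (Restrict A S) r →
     ∃ p, Restrict A S p r ∧ (p, r) ∉ E ∧ ∀ q, Restrict A S q r → q ≠ p → (q, r) ∈ E) ∧
  SubdivWitness (fun a b => Restrict A S a b ∧ (a, b) ∉ E) (S \ D) AT SW θ φ

/-- The subnetwork of `A` on vertex set `S` displays the subtree of `AT` on `SW`. -/
def DisplaysOn (A : V → V → Prop) (S : Set V) (AT : W → W → Prop) (SW : Set W)
    (θ : W → V) : Prop :=
  ∃ E D φ, DisplayWitness A S AT SW θ E D φ

/-- The leaves of the subnetwork of `A` induced on vertex set `S`. -/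
def SubLeaves (A : V → V → Prop) (S : Set V) : Set V :=
  {v | v ∈ S ∧ outDeg (Restrict A S) v = 0}

/-- `B` is a soft cluster in the subnetwork of `A` on vertex set `S`: `B` is the
cluster of some node of some phylogenetic tree displayed by that subnetwork. -/
def SoftClusterOn (A : V → V → Prop) (S : Set V) (B : Set V) : Prop :=
  ∃ (W : Type) (AT : W → W → Prop) (ρT : W) (θ : W → V),
    IsPhyloTree AT ρT ∧
    Set.BijOn θ {w | IsLeaf AT w} (SubLeaves A S) ∧
    DisplaysOn A S AT Set.univ θ ∧
    ∃ x : W, θ '' {w | IsLeaf AT w ∧ Relation.ReflTransGen AT x w} = B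

/-- `B` is a soft cluster of the node `u` of `N`: there are `E` and `D` as in the
definition of display such that `u` is a node of `(N − E) − D` and the set of leaves
of `N` below `u` in `(N − E) − D` equals `B`. -/
def SoftClusterAt (A : V → V → Prop) (u : V) (B : Set V) : Prop :=
  ∃ (E : Set (V × V)) (D : Set V),
    (∀ e ∈ E, A e.1 e.2 ∧ 2 ≤ inDeg A e.2) ∧
    (∀ r, 2 ≤ inDeg A r → ∃ p, A p r ∧ (p, r) ∉ E ∧ ∀ q, A q r → q ≠ p → (q, r) ∈ E) ∧
    (∃ (W : Type) (AT : W → W → Prop) (ρT : W) (θ : W → V),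
      IsPhyloTree AT ρT ∧ Set.BijOn θ {w | IsLeaf AT w} {v | IsLeaf A v} ∧
      IsSubdivisionOf (fun a b => A a b ∧ (a, b) ∉ E) (Set.univ \ D) AT Set.univ θ) ∧
    u ∉ D ∧
    {ℓ | IsLeaf A ℓ ∧
      Relation.ReflTransGen (fun a b => A a b ∧ (a, b) ∉ E ∧ a ∉ D ∧ b ∉ D) u ℓ} = B

/-- `w` is the lowest common ancestor of the set `X` in the (tree-like) digraph `A`. -/
def IsLCAIn (A : V → V → Prop) (X : Set V) (w : V) : Prop :=
  (∀ x ∈ X, Relation.ReflTransGen A w x) ∧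
  ∀ w', (∀ x ∈ X, Relation.ReflTransGen A w' x) → Relation.ReflTransGen A w' w

end PhyloNet

namespace PhyloNet

section Aux

variable {V : Type} {A : V → V → Prop} {ρ : V}

lemma aux_root_tree (hN : IsNetwork A ρ) : IsTreeNode A ρ := by
  rintro ⟨h2, -⟩
  rw [hN.root_indeg] at h2
  omega

lemma aux_no_parent_root (hN : IsNetwork A ρ) (u : V) : ¬ A u ρ := by
  haveI := hN.finite
  intro h
  have h0 : ({u | A u ρ} : Set V).ncard = 0 := hN.root_indeg
  have he : ({u | A u ρ} : Set V) = ∅ := (Set.ncard_eq_zero (Set.toFinite _)).mp h0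
  have : u ∈ ({u | A u ρ} : Set V) := h
  rw [he] at this
  exact this

lemma aux_exists_parent (hN : IsNetwork A ρ) {v : V} (hv : v ≠ ρ) : ∃ u, A u v := by
  rcases (hN.reach_from_root v).cases_tail with h | ⟨c, _, hc⟩
  · exact absurd h hv
  · exact ⟨c, hc⟩

lemma aux_unique_parent (hN : IsNetwork A ρ) {v : V} (hdeg : inDeg A v = 1)
    {a b : V} (ha : A a v) (hb : A b v) : a = b := by
  rcases Set.ncard_eq_one.mp hdeg with ⟨c, hc⟩
  have ha' : a ∈ ({u | A u v} : Set V) := ha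
  have hb' : b ∈ ({u | A u v} : Set V) := hb
  rw [hc] at ha' hb'
  rw [ha', hb']

lemma aux_ret_of_not_tree {v : V} (h : ¬ IsTreeNode A v) : IsRet A v := not_not.mp h

lemma aux_tree_indeg_one (hN : IsNetwork A ρ) {v : V} (hv : v ≠ ρ)
    (ht : IsTreeNode A v) : inDeg A v = 1 := by
  rcases hN.degree_cond v hv with ⟨h1, -⟩ | h2
  · exact h1
  · exact absurd h2 ht

/-- Build a list path from `ρ` to `x` avoiding `r` out of a restricted
reflexive-transitive chain. -/
lemma aux_path_avoiding (hρr : ρ ≠ r) {x : V}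
    (h : Relation.ReflTransGen (fun a b => A a b ∧ b ≠ r) ρ x) :
    ∃ p : List V, IsPath A ρ x p ∧ r ∉ p := by
  induction h with
  | refl =>
    exact ⟨[ρ], ⟨List.isChain_singleton ρ, rfl, rfl⟩, by simpa using fun h => hρr h.symm⟩
  | @tail a b h₁ h₂ ih =>
    obtain ⟨p, ⟨hc, hh, hl⟩, hr⟩ := ih
    refine ⟨p ++ [b], ⟨?_, ?_, ?_⟩, ?_⟩
    · show List.IsChain A (p ++ [b])
      rw [List.isChain_append]
      refine ⟨hc, List.isChain_singleton b, ?_⟩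
      intro x hx y hy
      rw [hl] at hx
      simp only [List.head?_cons, Option.mem_some_iff] at hx hy
      rw [← hx, ← hy] at *
      exact h₂.1
    · rw [List.head?_append, hh]; rfl
    · exact List.getLast?_concat
    · intro hmem
      rcases List.mem_append.mp hmem with h | h
      · exact hr h
      · simp only [List.mem_singleton] at h
        exact h₂.2 h.symm

/-- Nodes of a tree node component are tree nodes. -/
lemma aux_mem_comp_tree {u y : V} (hu : IsTreeNode A u)
    (h : Relation.ReflTransGen (TAdj A) u y) : IsTreeNode A y := by
  rcases h.cases_tail with h | ⟨c, _, hc⟩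
  · rw [h]; exact hu
  · exact hc.2.1

/-- From the root of a tree node component, every node of the component is
reachable by a directed path through tree nodes. -/
lemma aux_comp_chain (hN : IsNetwork A ρ) {S : Set V} {x : V}
    (hS : IsTNC A S) (hx : CompRoot A S x) :
    ∀ y ∈ S, Relation.ReflTransGen
      (fun a b => IsTreeNode A a ∧ IsTreeNode A b ∧ A a b) x y := by
  obtain ⟨u, hu, hSu⟩ := hS
  intro y hy
  have hxu : Relation.ReflTransGen (TAdj A) u x := by rw [hSu] at hx; exact hx.1
  have hyu : Relation.ReflTransGen (TAdj A) u y := by rw [hSu] at hy; exact hy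
  have hsymm : Symmetric (TAdj A) := by
    rintro a b ⟨ta, tb, hab⟩
    exact ⟨tb, ta, hab.symm⟩
  have hxy : Relation.ReflTransGen (TAdj A) x y :=
    ((@Relation.ReflTransGen.symmetric _ _ ⟨fun a b h => hsymm h⟩).symm _ _ hxu).trans hyu
  clear hyu hy
  induction hxy with
  | refl => exact Relation.ReflTransGen.refl
  | @tail a b h₁ h₂ ih =>
    rcases h₂ with ⟨ta, tb, hab | hba⟩
    · exact ih.tail ⟨ta, tb, hab⟩
    · -- b is a tree-node parent of a
      rcases ih.cases_tail with rfl | ⟨c, hc, hT⟩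
      · exact absurd hba (hx.2 b tb)
      · have haρ : a ≠ ρ := fun h => aux_no_parent_root hN b (h ▸ hba)
        have h1 : inDeg A a = 1 := aux_tree_indeg_one hN haρ ta
        have : b = c := aux_unique_parent hN h1 hba hT.2.2
        rw [this]; exact hc

/-- A tree node component has a unique root. -/
lemma aux_comproot_unique (hN : IsNetwork A ρ) {S : Set V} {x y : V}
    (hS : IsTNC A S) (hx : CompRoot A S x) (hy : CompRoot A S y) : y = x := by
  have h := aux_comp_chain hN hS hx y hy.1
  rcases h.cases_tail with h | ⟨c, _, hc⟩
  · exact h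
  · exact absurd hc.2.2 (hy.2 c hc.1)

/-- No internal tree node forms a singleton tree node component: key lemma. -/
lemma aux_no_singleton_internal (hN : IsNetwork A ρ) (hRV : RetVisible A ρ)
    {v r : V} (hvρ : v ≠ ρ) (hrv : A r v) (hret : IsRet A r)
    (hout : 2 ≤ outDeg A v) (hch : ∀ c, A v c → IsRet A c) : False := by
  haveI := hN.finite
  obtain ⟨ℓ, hℓ, hvis⟩ := hRV r hret
  have hρr : ρ ≠ r := by
    intro h
    have h2 := hret.1
    rw [← h, hN.root_indeg] at h2
    omega
  set X : Set V := {x | Relation.ReflTransGen (fun a b => A a b ∧ b ≠ r) ρ x} with hX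
  have hXstep : ∀ {x y : V}, x ∈ X → A x y → y ≠ r → y ∈ X :=
    fun hx hxy hy => Relation.ReflTransGen.tail hx ⟨hxy, hy⟩
  have hρX : ρ ∈ X := Relation.ReflTransGen.refl
  have hℓX : ℓ ∉ X := by
    intro h
    obtain ⟨p, hp, hrp⟩ := aux_path_avoiding hρr h
    exact hrp (hvis p hp)
  have hℓr : ℓ ≠ r := by
    intro h
    have := hℓ.2
    rw [h, hret.2] at this
    omega
  have hℓv : ℓ ≠ v := by
    intro h
    have := hℓ.2
    rw [h] at this
    omega
  set S : Set V := {y | y ∉ X ∧ y ≠ r ∧ y ≠ v} with hSdef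
  have hℓS : ℓ ∈ S := ⟨hℓX, hℓr, hℓv⟩
  haveI : IsTrans V (Relation.TransGen A) := inferInstance
  haveI : IsIrrefl V (Relation.TransGen A) := ⟨hN.acyclic⟩
  have hwf : WellFounded (Relation.TransGen A) :=
    Finite.wellFounded_of_trans_of_irrefl _
  obtain ⟨y, hyS, hymin⟩ := hwf.has_min S ⟨ℓ, hℓS⟩
  -- every parent of y equals v
  have hpar : ∀ p, A p y → p = v := by
    intro p hp
    by_contra hpv
    have h1 : p ∉ S := fun hpS => hymin p hpS (Relation.TransGen.single hp)
    have hpr : p ≠ r := by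
      rintro rfl
      have hsub : ({v, y} : Set V) ⊆ {w | A p w} := by
        rintro z (rfl | rfl)
        · exact hrv
        · exact hp
      have h2 : 2 ≤ outDeg A p := by
        rw [← Set.ncard_pair (Ne.symm hyS.2.2)]
        exact Set.ncard_le_ncard hsub (Set.toFinite _)
      rw [hret.2] at h2
      omega
    have hpX : p ∉ X := fun h => hyS.1 (hXstep h hp hyS.2.1)
    exact h1 ⟨hpX, hpr, hpv⟩
  have hyρ : y ≠ ρ := fun h => hyS.1 (h ▸ hρX)
  obtain ⟨p, hp⟩ := aux_exists_parent hN hyρ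
  have hpv : p = v := hpar p hp
  rw [hpv] at hp
  -- y is a child of v, hence a reticulation, hence has indegree ≥ 2
  have hyret : IsRet A y := hch y hp
  have h2 := hyret.1
  have hsub : ({u | A u y} : Set V) ⊆ {v} := fun u hu => hpar u hu
  have hle : inDeg A y ≤ 1 := by
    have := Set.ncard_le_ncard hsub (Set.toFinite _)
    rw [Set.ncard_singleton] at this; exact this
  omega

end Aux

/-- Every reticulation-visible network with at least two leaves has a big tree node
component `C` such that every tree node component whose root is a proper descendant
of the root of `C` is a single-leaf component. -/
theorem exists_lowest_big_component {V : Type} (A : V → V → Prop) (ρ : V)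
    (hN : IsNetwork A ρ) (hRV : RetVisible A ρ)
    (hleaves : ∃ ℓ₁ ℓ₂, IsLeaf A ℓ₁ ∧ IsLeaf A ℓ₂ ∧ ℓ₁ ≠ ℓ₂) :
    ∃ C, LowestBig A C := by
  haveI := hN.finite
  clear hleaves
  -- ρ is a tree node
  have hρtree : IsTreeNode A ρ := aux_root_tree hN
  -- ρ has a tree-node child
  haveI : IsTrans V (Relation.TransGen A) := inferInstance
  haveI : IsIrrefl V (Relation.TransGen A) := ⟨hN.acyclic⟩
  have hwf : WellFounded (Relation.TransGen A) :=
    Finite.wellFounded_of_trans_of_irrefl _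
  have hchild : ∃ y, A ρ y ∧ IsTreeNode A y := by
    have hne : ({x | x ≠ ρ} : Set V).Nonempty := by
      have h2 := hN.root_outdeg
      have : ({w | A ρ w} : Set V).Nonempty := by
        rw [Set.nonempty_iff_ne_empty]
        intro h
        rw [outDeg, h, Set.ncard_empty] at h2
        omega
      obtain ⟨w, hw⟩ := this
      exact ⟨w, fun h => hN.acyclic ρ (Relation.TransGen.single (h ▸ hw))⟩
    obtain ⟨y, hyS, hymin⟩ := hwf.has_min _ hne
    have hpar : ∀ p, A p y → p = ρ := by
      intro p hp
      by_contra hpρ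
      exact hymin p hpρ (Relation.TransGen.single hp)
    obtain ⟨p, hp⟩ := aux_exists_parent hN hyS
    have hpρ : p = ρ := hpar p hp
    rw [hpρ] at hp
    refine ⟨y, hp, ?_⟩
    rintro ⟨h2, -⟩
    have hsub : ({u | A u y} : Set V) ⊆ {ρ} := fun u hu => hpar u hu
    have hle : inDeg A y ≤ 1 := by
      have := Set.ncard_le_ncard hsub (Set.toFinite _)
      rw [Set.ncard_singleton] at this; exact this
    omega
  obtain ⟨y₀, hy₀, hy₀tree⟩ := hchild
  -- the component of ρ is big, with root ρ
  have hρroot : CompRoot A {v | Relation.ReflTransGen (TAdj A) ρ v} ρ :=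
    ⟨Relation.ReflTransGen.refl, fun u _ => aux_no_parent_root hN u⟩
  have hρbig : BigTNC A {v | Relation.ReflTransGen (TAdj A) ρ v} := by
    refine ⟨⟨ρ, hρtree, rfl⟩, ρ, Relation.ReflTransGen.refl, y₀,
      Relation.ReflTransGen.single ⟨hρtree, hy₀tree, Or.inl hy₀⟩, ?_⟩
    intro h
    exact hN.acyclic ρ (Relation.TransGen.single (h ▸ hy₀))
  -- B: set of roots of big tree node components
  set B : Set V := {x | ∃ C, BigTNC A C ∧ CompRoot A C x} with hB
  have hBne : B.Nonempty := ⟨ρ, _, hρbig, hρroot⟩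
  haveI : IsTrans V (fun a b => Relation.TransGen A b a) := ⟨fun _ _ _ h1 h2 => h2.trans h1⟩
  haveI : IsIrrefl V (fun a b => Relation.TransGen A b a) := ⟨hN.acyclic⟩
  have hwf' : WellFounded (fun a b : V => Relation.TransGen A b a) :=
    Finite.wellFounded_of_trans_of_irrefl _
  obtain ⟨x, hxB, hxmin⟩ := hwf'.has_min B hBne
  obtain ⟨C, hCbig, hCroot⟩ := hxB
  refine ⟨C, hCbig, ?_⟩
  intro C' r' rC hTNC' hroot' hrootC h4
  -- rC = x by uniqueness of component roots
  have hrCx : rC = x := aux_comproot_unique hN hCbig.1 hCroot hrootC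
  rw [hrCx] at h4
  -- C' is not big, hence a singleton {r'}
  have hC'nb : ¬ BigTNC A C' := by
    intro hbig'
    exact hxmin r' ⟨C', hbig', hroot'⟩ h4
  have hC'sub : ∀ a ∈ C', ∀ b ∈ C', a = b := by
    intro a ha b hb
    by_contra hab
    exact hC'nb ⟨hTNC', a, ha, b, hb, hab⟩
  have hr'C : r' ∈ C' := hroot'.1
  have hC'eq : C' = {r'} := by
    ext z
    constructor
    · intro hz; exact hC'sub z hz r' hr'C
    · intro hz; rw [Set.mem_singleton_iff] at hz; rw [hz]; exact hr'C
  -- r' is a tree node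
  have hr'tree : IsTreeNode A r' := by
    obtain ⟨u, hu, hSu⟩ := hTNC'
    have := hr'C
    rw [hSu] at this
    exact aux_mem_comp_tree hu this
  -- r' has a parent, hence r' ≠ ρ
  obtain ⟨q, -, hq⟩ := Relation.TransGen.tail'_iff.mp h4
  have hr'ρ : r' ≠ ρ := fun h => aux_no_parent_root hN q (h ▸ hq)
  -- degree analysis for r'
  have hdeg := aux_tree_indeg_one hN hr'ρ hr'tree
  rcases hN.degree_cond r' hr'ρ with ⟨-, h0 | h2⟩ | hretr'
  · -- r' is a leaf
    exact ⟨r', ⟨hdeg, h0⟩, hC'eq⟩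
  · -- r' is an internal tree node: contradiction with the key lemma
    exfalso
    have hqret : IsRet A q := aux_ret_of_not_tree (by
      intro htree
      exact hroot'.2 q htree hq)
    have hch : ∀ c, A r' c → IsRet A c := by
      intro c hc
      by_contra hcnr
      have hctree : IsTreeNode A c := hcnr
      have hcC' : c ∈ C' := by
        obtain ⟨u, hu, hSu⟩ := hTNC'
        have hr'u : Relation.ReflTransGen (TAdj A) u r' := by
          have := hr'C; rw [hSu] at this; exact this
        have : Relation.ReflTransGen (TAdj A) u c :=
          hr'u.tail ⟨hr'tree, hctree, Or.inl hc⟩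
        rw [hSu]; exact this
      rw [hC'eq, Set.mem_singleton_iff] at hcC'
      rw [hcC'] at hc
      exact hN.acyclic r' (Relation.TransGen.single hc)
    exact aux_no_singleton_internal hN hRV hr'ρ hq hqret h2 hch
  · exact absurd hretr' hr'tree

end PhyloNet
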